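/- In B_6, the element δ_4^2 belongs to N(ρ_{{5}}^6), where ρ_{{5}}^6 = ((1 2),(1 2),(2 3),(2 3),(2 3),(1 4)); that is, δ_4 is equivalent to δ_4^{-1} modulo the colored-braid moves for this coloring. -/

import Mathlib

open Equiv MulOpposite

namespace ApostolakisMoves

variable {G : Type*} [Group G]

/-- The `i`-th Hurwitz move on sequences of group elements. -/
def hFun (i : ℕ) (f : ℕ → G) : ℕ → G := fun j =>
  if j = i then f i * f (i + 1) * (f i)⁻¹ else if j = i + 1 then f i else f j

/-- The inverse of the `i`-th Hurwitz move. -/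
def hInv (i : ℕ) (f : ℕ → G) : ℕ → G := fun j =>
  if j = i then f (i + 1) else if j = i + 1 then (f (i + 1))⁻¹ * f i * f (i + 1) else f j

/-- The `i`-th Hurwitz move as a permutation of sequences of group elements. -/
def hGen (G : Type*) [Group G] (i : ℕ) : Equiv.Perm (ℕ → G) where
  toFun := hFun i
  invFun := hInv i
  left_inv := by
    intro f
    funext j
    have h1 : i + 1 ≠ i := by omega
    by_cases hj : j = i
    · subst hj; simp [hFun, hInv, h1]
    · by_cases hj' : j = i + 1
      · subst hj'
        simp only [hFun, hInv, h1, if_neg, if_pos, eq_self_iff_true, if_true, if_false]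
        group
      · simp [hFun, hInv, hj, hj']
  right_inv := by
    intro f
    funext j
    have h1 : i + 1 ≠ i := by omega
    by_cases hj : j = i
    · subst hj
      simp only [hFun, hInv, h1, if_neg, if_pos, eq_self_iff_true, if_true, if_false]
      group
    · by_cases hj' : j = i + 1
      · subst hj'; simp [hFun, hInv, h1]
      · simp [hFun, hInv, hj, hj']

@[simp] lemma hGen_apply (i : ℕ) (f : ℕ → G) : hGen G i f = hFun i f := rfl

lemma braid_rel (G : Type*) [Group G] (i : ℕ) :
    hGen G i * hGen G (i + 1) * hGen G i = hGen G (i + 1) * hGen G i * hGen G (i + 1) := by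
  apply Equiv.ext
  intro f
  funext k
  simp only [Equiv.Perm.mul_apply, hGen_apply, hFun]
  split_ifs <;> first | omega | group

lemma comm_rel (G : Type*) [Group G] {i j : ℕ} (h : i + 2 ≤ j) :
    hGen G i * hGen G j = hGen G j * hGen G i := by
  apply Equiv.ext
  intro f
  funext k
  simp only [Equiv.Perm.mul_apply, hGen_apply, hFun]
  split_ifs <;> first | rfl | omega

/-- The braid relations, as a set of elements of the free group on `n - 1` generators. -/
def braidRels (n : ℕ) : Set (FreeGroup (Fin (n - 1))) :=
  {r | ∃ i j : Fin (n - 1),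
    ((i : ℕ) + 1 = (j : ℕ) ∧
      r = .of i * .of j * .of i * (.of j * .of i * .of j)⁻¹) ∨
    ((i : ℕ) + 2 ≤ (j : ℕ) ∧ r = .of i * .of j * (.of j * .of i)⁻¹)}

/-- The braid group on `n` strands, presented by the generators `β_0, …, β_{n-2}` subject to
the braid relations. -/
abbrev BraidGroup (n : ℕ) := PresentedGroup (braidRels n)

/-- The standard generator `β_i` of the braid group on `n` strands (equal to `1` if `i` is
out of range). -/
def braidGen (n i : ℕ) : BraidGroup n :=
  if h : i < n - 1 then PresentedGroup.of ⟨i, h⟩ else 1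

/-- The Hurwitz (right) action of the braid group, as a homomorphism into the opposite of the
permutation group of sequences. -/
def braidActHom (n : ℕ) (G : Type*) [Group G] : BraidGroup n →* (Equiv.Perm (ℕ → G))ᵐᵒᵖ :=
  PresentedGroup.toGroup (f := fun i : Fin (n - 1) => op (hGen G (i : ℕ))) (by
    rintro r ⟨i, j, ⟨hij, rfl⟩ | ⟨hij, rfl⟩⟩
    · have key : hGen G (i : ℕ) * hGen G (j : ℕ) * hGen G (i : ℕ)
          = hGen G (j : ℕ) * hGen G (i : ℕ) * hGen G (j : ℕ) := by
        rw [← hij]; exact braid_rel G i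
      simp only [map_mul, map_inv, FreeGroup.lift_apply_of]
      rw [mul_inv_eq_one]
      simp only [← op_mul]
      exact congrArg op (by rw [← mul_assoc, ← mul_assoc, key])
    · have key : hGen G (i : ℕ) * hGen G (j : ℕ) = hGen G (j : ℕ) * hGen G (i : ℕ) :=
        comm_rel G hij
      simp only [map_mul, map_inv, FreeGroup.lift_apply_of]
      rw [mul_inv_eq_one]
      simp only [← op_mul]
      exact congrArg op key.symm)

/-- The Hurwitz right action: `ρ · β`. -/
def act {n : ℕ} {G : Type*} [Group G] (ρ : ℕ → G) (β : BraidGroup n) : ℕ → G :=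
  (braidActHom n G β).unop ρ

lemma act_one {n : ℕ} (ρ : ℕ → G) : act ρ (1 : BraidGroup n) = ρ := by
  simp [act]

lemma act_mul {n : ℕ} (ρ : ℕ → G) (a b : BraidGroup n) :
    act ρ (a * b) = act (act ρ a) b := by
  simp [act, map_mul]

/-- `Aut ρ`: the stabilizer of the sequence `ρ` under the Hurwitz action of the braid group. -/
def stab (n : ℕ) {G : Type*} [Group G] (ρ : ℕ → G) : Subgroup (BraidGroup n) where
  carrier := {β | act ρ β = ρ}
  one_mem' := act_one ρ
  mul_mem' := by
    intro a b ha hb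
    simp only [Set.mem_setOf_eq] at *
    rw [act_mul, ha, hb]
  inv_mem' := by
    intro a ha
    simp only [Set.mem_setOf_eq] at *
    have h := act_mul ρ a a⁻¹
    rw [mul_inv_cancel, act_one, ha] at h
    exact h.symm


/-- The transposition `(1 2)` of `S₄`. -/
def t12 : Equiv.Perm (Fin 4) := Equiv.swap 0 1
/-- The transposition `(1 3)` of `S₄`. -/
def t13 : Equiv.Perm (Fin 4) := Equiv.swap 0 2
/-- The transposition `(1 4)` of `S₄`. -/
def t14 : Equiv.Perm (Fin 4) := Equiv.swap 0 3
/-- The transposition `(2 3)` of `S₄`. -/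
def t23 : Equiv.Perm (Fin 4) := Equiv.swap 1 2
/-- The transposition `(1 2)` of `S₃`. -/
def s12 : Equiv.Perm (Fin 3) := Equiv.swap 0 1
/-- The transposition `(2 3)` of `S₃`. -/
def s23 : Equiv.Perm (Fin 3) := Equiv.swap 1 2

/-- The tuple `ρ_I^n` : `(1 2)` in positions `0` and `1`, `(1 4)` in the positions of `I`,
and `(2 3)` everywhere else (an `n`-tuple is encoded as a function `ℕ → S₄` whose values at
positions `≥ n` are the irrelevant constant `(2 3)`). -/
def rhoI (I : Finset ℕ) : ℕ → Equiv.Perm (Fin 4) := fun i =>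
  if i < 2 then t12 else if i ∈ I then t14 else t23

/-- The tuple `ρ̃_I^n` : `(1 2)` in positions `0` and `1`, `(2 3)` in the positions of `I`,
and `(1 4)` everywhere else. -/
def rhoTI (I : Finset ℕ) : ℕ → Equiv.Perm (Fin 4) := fun i =>
  if i < 2 then t12 else if i ∈ I then t23 else t14

/-- The tuple `ρ(n)` : `(1 2)` in positions `0` and `1` and `(2 3)` everywhere else. -/
def rho3 : ℕ → Equiv.Perm (Fin 3) := fun i => if i < 2 then s12 else s23

/-- `L(n) = Aut(ρ(n))`, the liftable braid subgroup. -/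
def Ln (n : ℕ) : Subgroup (BraidGroup n) := stab n rho3

/-- The braid `δ₄ = w⁻¹ β₄ w`, `w = β₃ β₂ β₁² β₂ β₃² β₂ β₁`. -/
def delta4 (n : ℕ) : BraidGroup n :=
  (braidGen n 3 * braidGen n 2 * (braidGen n 1) ^ 2 * braidGen n 2 * (braidGen n 3) ^ 2 *
      braidGen n 2 * braidGen n 1)⁻¹ *
    braidGen n 4 *
    (braidGen n 3 * braidGen n 2 * (braidGen n 1) ^ 2 * braidGen n 2 * (braidGen n 3) ^ 2 *
      braidGen n 2 * braidGen n 1)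

/-- The braid `δ₆ = v⁻¹ δ₄ v`, `v = β₅⁻¹ β₄⁻¹ β₃⁻¹ β₂⁻¹ β₆⁻¹ β₅⁻¹ β₄⁻¹ β₃⁻¹`. -/
def delta6 (n : ℕ) : BraidGroup n :=
  ((braidGen n 5)⁻¹ * (braidGen n 4)⁻¹ * (braidGen n 3)⁻¹ * (braidGen n 2)⁻¹ *
      (braidGen n 6)⁻¹ * (braidGen n 5)⁻¹ * (braidGen n 4)⁻¹ * (braidGen n 3)⁻¹)⁻¹ *
    delta4 n *
    ((braidGen n 5)⁻¹ * (braidGen n 4)⁻¹ * (braidGen n 3)⁻¹ * (braidGen n 2)⁻¹ *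
      (braidGen n 6)⁻¹ * (braidGen n 5)⁻¹ * (braidGen n 4)⁻¹ * (braidGen n 3)⁻¹)

/-- The generating set of the subgroup `N(ρ)` of colored-braid moves: conjugates `w β_i³ w⁻¹`
where the entries in positions `i, i+1` of `ρ · w` are distinct transpositions sharing exactly
one point of their supports (move `𝓜`), and conjugates `w β_i² w⁻¹` where those entries are
transpositions with disjoint supports (move `𝓟`). -/
def NSet (n : ℕ) {m : ℕ} (ρ : ℕ → Equiv.Perm (Fin m)) : Set (BraidGroup n) :=
  {x | ∃ w : BraidGroup n, ∃ i : ℕ, i < n - 1 ∧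
    ((x = w * (braidGen n i) ^ 3 * w⁻¹ ∧
        (act ρ w i).IsSwap ∧ (act ρ w (i + 1)).IsSwap ∧
        ((act ρ w i).support ∩ (act ρ w (i + 1)).support).card = 1) ∨
      (x = w * (braidGen n i) ^ 2 * w⁻¹ ∧
        (act ρ w i).IsSwap ∧ (act ρ w (i + 1)).IsSwap ∧
        Disjoint (act ρ w i).support (act ρ w (i + 1)).support))}

/-- The subgroup `N(ρ)` generated by the colored-braid moves `𝓜` and `𝓟`. -/
def N (n : ℕ) {m : ℕ} (ρ : ℕ → Equiv.Perm (Fin m)) : Subgroup (BraidGroup n) :=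
  Subgroup.closure (NSet n ρ)

/-- The ordered product `β_a β_{a+1} ⋯ β_b` of braid generators. -/
def genProd (n a b : ℕ) : BraidGroup n :=
  ((List.range' a (b + 1 - a)).map (braidGen n)).prod


/-- In `B₆`, `δ₄²` belongs to `N(ρ_{5}⁶)`: `δ₄` is equivalent to `δ₄⁻¹`
modulo the colored-braid moves for the coloring `ρ_{5}⁶ = ((1 2),(1 2),(2 3),(2 3),(2 3),(1 4))`. -/
lemma act_gen {n : ℕ} {i : ℕ} (h : i < n - 1) (ρ : ℕ → G) :
    act ρ (braidGen n i) = hFun i ρ := by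
  simp only [act, braidGen, dif_pos h, braidActHom, PresentedGroup.toGroup.of]
  rfl

/-- The tuple `ρ_{5}⁶ · w⁻¹` computed explicitly. -/
def sigma14 : ℕ → Equiv.Perm (Fin 4) := fun j =>
  if j < 4 then t12 else if j = 4 then t23 else if j = 5 then t14 else t23

set_option maxRecDepth 4000 in
theorem delta4_sq_mem_N :
    (delta4 6) ^ 2 ∈ N 6 (rhoI {5}) := by
  set W : BraidGroup 6 :=
    braidGen 6 3 * braidGen 6 2 * (braidGen 6 1) ^ 2 * braidGen 6 2 * (braidGen 6 3) ^ 2 *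
      braidGen 6 2 * braidGen 6 1 with hW
  have hkey : act sigma14 W = rhoI {5} := by
    rw [hW]
    simp only [pow_two, act_mul,
      act_gen (show (1:ℕ) < 6 - 1 by norm_num),
      act_gen (show (2:ℕ) < 6 - 1 by norm_num),
      act_gen (show (3:ℕ) < 6 - 1 by norm_num)]
    funext j
    by_cases hj : j < 6
    · interval_cases j <;> decide
    · simp [hFun, rhoI, sigma14,
        show j ≠ 1 by omega, show j ≠ 2 by omega, show j ≠ 3 by omega,
        show j ≠ 4 by omega, show j ≠ 5 by omega,
        show ¬ j < 2 by omega, show ¬ j < 4 by omega, show ¬ j < 6 by omega]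
  have hσ : act (rhoI {5}) W⁻¹ = sigma14 := by
    conv_lhs => rw [← hkey]
    rw [← act_mul, mul_inv_cancel, act_one]
  apply Subgroup.subset_closure
  refine ⟨W⁻¹, 4, by norm_num, Or.inr ⟨?_, ?_, ?_, ?_⟩⟩
  · rw [delta4, ← hW, inv_inv, pow_two, pow_two]
    group
  · rw [hσ]; exact ⟨1, 2, by decide, rfl⟩
  · rw [hσ]; exact ⟨0, 3, by decide, rfl⟩
  · rw [hσ]; decide

end ApostolakisMoves
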